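/- For every r ≥ 1, p, k ∈ ℤ, every α ∈ Z_r^{p,k}, and every choice of witnesses z_{p+1}, …, z_{p+r−1} as in the definition of Z_r^{p,k}, there exist harmonic elements ω̄_{p+i} ∈ ker d_0 ∩ ker d_0* ∩ H_{p+i,k−p−i} for i = 1, …, r−1, satisfying d_c^j(Π_0 α) = ∑_{i=1}^{j−1} d_c^i(ω̄_{p+j−i}) for all j = 1, …, r−1, such that (d_r α − ∑_{i=1}^{r−1} d_{r−i} z_{p+i}) − (d_c^r(Π_0 α) − ∑_{i=2}^{r−1} d_c^i(ω̄_{p+r−i})) ∈ B_r^{p+r,k+1}. In other words, the r-th spectral sequence differential applied to the class of α is represented by d_c^r(Π_0 α) − ∑_{i=2}^{r−1} d_c^i(ω̄_{p+r−i}). -/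

import Mathlib

open scoped InnerProductSpace

set_option linter.unusedSectionVars false
set_option maxHeartbeats 1000000

section SumHelpers
variable {M : Type*} [AddCommMonoid M]

lemma sumIcoReflect (n : ℕ) (f₁ f₂ : ℕ → M) (h : ∀ i, 1 ≤ i → i < n → f₁ i = f₂ (n - i)) :
    ∑ i ∈ Finset.Ico 1 n, f₁ i = ∑ i ∈ Finset.Ico 1 n, f₂ i := by
  refine Finset.sum_nbij' (fun a => n - a) (fun a => n - a) ?_ ?_ ?_ ?_ ?_ <;>
    · intro a ha
      simp only [Finset.mem_Ico] at ha ⊢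
      first
        | omega
        | exact h a ha.1 ha.2

lemma tripleSwapA (n : ℕ) (F : ℕ → ℕ → ℕ → M) :
    ∑ i ∈ Finset.Ico 1 n, ∑ j ∈ Finset.Ico 1 (n - i), F i j (n - i - j)
      = ∑ m ∈ Finset.Ico 1 n, ∑ i ∈ Finset.Ico 1 (n - m), F i (n - m - i) m := by
  rw [Finset.sum_sigma', Finset.sum_sigma']
  refine Finset.sum_nbij' (fun x => ⟨n - x.1 - x.2, x.1⟩) (fun x => ⟨x.2, n - x.1 - x.2⟩)
    ?_ ?_ ?_ ?_ ?_
  · rintro ⟨a, b⟩ ha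
    simp only [Finset.mem_sigma, Finset.mem_Ico] at ha ⊢
    omega
  · rintro ⟨a, b⟩ ha
    simp only [Finset.mem_sigma, Finset.mem_Ico] at ha ⊢
    omega
  · rintro ⟨a, b⟩ ha
    simp only [Finset.mem_sigma, Finset.mem_Ico] at ha
    obtain ⟨⟨ha1, ha2⟩, hb1, hb2⟩ := ha
    have h1 : n - (n - a - b) - a = b := by omega
    simp [h1]
  · rintro ⟨a, b⟩ ha
    simp only [Finset.mem_sigma, Finset.mem_Ico] at ha
    obtain ⟨⟨ha1, ha2⟩, hb1, hb2⟩ := ha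
    have h2 : n - b - (n - a - b) = a := by omega
    simp [h2]
  · rintro ⟨a, b⟩ ha
    simp only [Finset.mem_sigma, Finset.mem_Ico] at ha
    have h1 : n - (n - a - b) - a = b := by omega
    simp only [h1]

lemma tripleSwapB (n : ℕ) (F : ℕ → ℕ → M) :
    ∑ a ∈ Finset.Ico 1 n, ∑ b ∈ Finset.Ico 1 (n - a), F a b
      = ∑ b ∈ Finset.Ico 1 n, ∑ a ∈ Finset.Ico 1 (n - b), F a b := by
  rw [Finset.sum_sigma', Finset.sum_sigma']
  refine Finset.sum_nbij' (fun x => ⟨x.2, x.1⟩) (fun x => ⟨x.2, x.1⟩) ?_ ?_ ?_ ?_ ?_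
  · rintro ⟨a, b⟩ ha
    simp only [Finset.mem_sigma, Finset.mem_Ico] at ha ⊢
    omega
  · rintro ⟨a, b⟩ ha
    simp only [Finset.mem_sigma, Finset.mem_Ico] at ha ⊢
    omega
  · rintro ⟨a, b⟩ _; rfl
  · rintro ⟨a, b⟩ _; rfl
  · rintro ⟨a, b⟩ _; rfl

end SumHelpers
section OpHelpers
variable {H : Type*} [NormedAddCommGroup H] [InnerProductSpace ℝ H] [CompleteSpace H]
variable {D : ℕ → H →L[ℝ] H} {g : H →L[ℝ] H} {P : ℕ → H →L[ℝ] H}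

lemma ddApply (hDD : ∀ n : ℕ, ∑ i ∈ Finset.range (n + 1), (D i).comp (D (n - i)) = 0)
    (n : ℕ) (x : H) : ∑ i ∈ Finset.range (n + 1), D i (D (n - i) x) = 0 := by
  have := congrArg (fun f : H →L[ℝ] H => f x) (hDD n)
  simpa using this

lemma d0d0 (hDD : ∀ n : ℕ, ∑ i ∈ Finset.range (n + 1), (D i).comp (D (n - i)) = 0)
    (x : H) : D 0 (D 0 x) = 0 := by
  simpa using ddApply hDD 0 x

lemma d0gd0 (hgd_perp : ∀ x : H, x - g (D 0 x) ∈ ((LinearMap.ker (D 0 : H →ₗ[ℝ] H))ᗮ)ᗮ)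
    (x : H) : D 0 (g (D 0 x)) = D 0 x := by
  haveI : CompleteSpace (LinearMap.ker (D 0 : H →ₗ[ℝ] H)) :=
    (ContinuousLinearMap.isClosed_ker (D 0)).completeSpace_coe
  have hK : ((LinearMap.ker (D 0 : H →ₗ[ℝ] H))ᗮᗮ : Submodule ℝ H) = LinearMap.ker (D 0 : H →ₗ[ℝ] H) :=
    Submodule.orthogonal_orthogonal _
  have h1 := hgd_perp x
  rw [hK, LinearMap.mem_ker] at h1
  rw [map_sub, sub_eq_zero] at h1
  exact h1.symm

lemma grange (hdg_perp : ∀ x : H, x - D 0 (g x) ∈ (LinearMap.range (D 0 : H →ₗ[ℝ] H))ᗮ)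
    (hgvan : ∀ x ∈ (LinearMap.range (D 0 : H →ₗ[ℝ] H))ᗮ, g x = 0) (x : H) :
    g (D 0 (g x)) = g x := by
  have h1 := hgvan _ (hdg_perp x)
  rw [map_sub, sub_eq_zero] at h1
  exact h1.symm

lemma gg (hDD : ∀ n : ℕ, ∑ i ∈ Finset.range (n + 1), (D i).comp (D (n - i)) = 0)
    (hdg_perp : ∀ x : H, x - D 0 (g x) ∈ (LinearMap.range (D 0 : H →ₗ[ℝ] H))ᗮ)
    (hgd_mem : ∀ x : H, g (D 0 x) ∈ (LinearMap.ker (D 0 : H →ₗ[ℝ] H))ᗮ)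
    (hgvan : ∀ x ∈ (LinearMap.range (D 0 : H →ₗ[ℝ] H))ᗮ, g x = 0) (x : H) :
    g (g x) = 0 := by
  have hsub : LinearMap.range (D 0 : H →ₗ[ℝ] H) ≤ LinearMap.ker (D 0 : H →ₗ[ℝ] H) := by
    rintro _ ⟨y, rfl⟩
    exact d0d0 hDD y
  have hmem : g x ∈ (LinearMap.range (D 0 : H →ₗ[ℝ] H))ᗮ := by
    have : g x ∈ (LinearMap.ker (D 0 : H →ₗ[ℝ] H))ᗮ := by
      rw [← grange hdg_perp hgvan x]
      exact hgd_mem (g x)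
    exact Submodule.orthogonal_le hsub this
  exact hgvan _ hmem

lemma adjointZero (u : H) (hu : u ∈ (LinearMap.range (D 0 : H →ₗ[ℝ] H))ᗮ) :
    ContinuousLinearMap.adjoint (D 0) u = 0 := by
  rw [← inner_self_eq_zero (𝕜 := ℝ) (x := ContinuousLinearMap.adjoint (D 0) u)]
  rw [ContinuousLinearMap.adjoint_inner_left]
  exact (Submodule.mem_orthogonal' _ _).1 hu _ ⟨_, rfl⟩

lemma d0gRange (hgd_perp : ∀ x : H, x - g (D 0 x) ∈ ((LinearMap.ker (D 0 : H →ₗ[ℝ] H))ᗮ)ᗮ)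
    {x : H} (hx : x ∈ LinearMap.range (D 0 : H →ₗ[ℝ] H)) : D 0 (g x) = x := by
  obtain ⟨y, rfl⟩ := hx
  exact d0gd0 hgd_perp y

end OpHelpers
section OpHelpers2
variable {H : Type*} [NormedAddCommGroup H] [InnerProductSpace ℝ H] [CompleteSpace H]
variable {D : ℕ → H →L[ℝ] H} {g : H →L[ℝ] H} {P : ℕ → H →L[ℝ] H}
variable {Hgr : ℤ × ℤ → Submodule ℝ H}

lemma memCongr {x : H} {a b a' b' : ℤ} (h : x ∈ Hgr (a, b)) (ha : a' = a) (hb : b' = b) :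
    x ∈ Hgr (a', b') := by rw [ha, hb]; exact h

lemma PqApply (hP1 : P 1 = D 1)
    (hPrec : ∀ r : ℕ, 2 ≤ r →
      P r = D r - ∑ j ∈ Finset.Ico 1 r, (D (r - j)).comp (g.comp (P j)))
    {q : ℕ} (hq : 1 ≤ q) (x : H) :
    P q x = D q x - ∑ j ∈ Finset.Ico 1 q, D (q - j) (g (P j x)) := by
  rcases eq_or_lt_of_le hq with h1 | h2
  · simp [← h1, hP1]
  · have := congrArg (fun f : H →L[ℝ] H => f x) (hPrec q h2)
    simpa using this

lemma Pdeg (hP1 : P 1 = D 1)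
    (hPrec : ∀ r : ℕ, 2 ≤ r →
      P r = D r - ∑ j ∈ Finset.Ico 1 r, (D (r - j)).comp (g.comp (P j)))
    (hDdeg : ∀ (i : ℕ) (a b : ℤ), ∀ x ∈ Hgr (a, b), D i x ∈ Hgr (a + (i : ℤ), b + 1 - (i : ℤ)))
    (hgdeg : ∀ (a b : ℤ), ∀ x ∈ Hgr (a, b), g x ∈ Hgr (a, b - 1)) :
    ∀ q : ℕ, 1 ≤ q → ∀ (a b : ℤ) (x : H), x ∈ Hgr (a, b) →
      P q x ∈ Hgr (a + (q : ℤ), b + 1 - (q : ℤ)) := by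
  intro q
  induction q using Nat.strong_induction_on with
  | _ q ih =>
    intro hq a b x hx
    rw [PqApply hP1 hPrec hq]
    refine Submodule.sub_mem _ (hDdeg q a b x hx) (Submodule.sum_mem _ ?_)
    intro j hj
    simp only [Finset.mem_Ico] at hj
    have h1 : P j x ∈ Hgr (a + (j : ℤ), b + 1 - (j : ℤ)) := ih j hj.2 hj.1 a b x hx
    have h2 := hgdeg _ _ _ h1
    have h3 := hDdeg (q - j) _ _ _ h2
    refine memCongr h3 ?_ ?_ <;>
      · have : ((q - j : ℕ) : ℤ) = (q : ℤ) - (j : ℤ) := by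
          have := hj.2.le
          push_cast [this]
          ring
        rw [this]; ring

end OpHelpers2

section CoreAlgebra
variable {H : Type*} [NormedAddCommGroup H] [InnerProductSpace ℝ H] [CompleteSpace H]
variable {D : ℕ → H →L[ℝ] H} {g : H →L[ℝ] H} {P : ℕ → H →L[ℝ] H}

/-- `d₀ d_m y = -∑_{i=1}^{m} d_i d_{m-i} y`. -/
lemma d0dm (hDD : ∀ n : ℕ, ∑ i ∈ Finset.range (n + 1), (D i).comp (D (n - i)) = 0)
    (m : ℕ) (y : H) :
    D 0 (D m y) = -∑ i ∈ Finset.Ico 1 (m + 1), D i (D (m - i) y) := by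
  have h0 := ddApply hDD m y
  rw [Finset.range_eq_Ico, Finset.sum_eq_sum_Ico_succ_bot (Nat.succ_pos m)] at h0
  simp only [Nat.sub_zero] at h0
  exact eq_neg_of_add_eq_zero_left h0

/-- Key identity (C′): for `d₀ x = 0`,
`d₀ ∂_q x = -∑_{j=1}^{q-1} d_{q-j} (∂_j x - d₀ g ∂_j x)`. -/
lemma Cprime (hDD : ∀ n : ℕ, ∑ i ∈ Finset.range (n + 1), (D i).comp (D (n - i)) = 0)
    (hP1 : P 1 = D 1)
    (hPrec : ∀ r : ℕ, 2 ≤ r →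
      P r = D r - ∑ j ∈ Finset.Ico 1 r, (D (r - j)).comp (g.comp (P j)))
    {q : ℕ} (hq : 1 ≤ q) (x : H) (hx : D 0 x = 0) :
    D 0 (P q x) = -∑ j ∈ Finset.Ico 1 q, D (q - j) (P j x - D 0 (g (P j x))) := by
  have e2 : D 0 (D q x) = -∑ i ∈ Finset.Ico 1 q, D i (D (q - i) x) := by
    rw [d0dm hDD q x, Finset.sum_Ico_succ_top hq]
    simp [hx]
  have e3 : ∀ j ∈ Finset.Ico 1 q, D 0 (D (q - j) (g (P j x)))
      = -∑ i ∈ Finset.Ico 1 (q - j), D i (D (q - j - i) (g (P j x)))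
        - D (q - j) (D 0 (g (P j x))) := by
    intro j hj
    simp only [Finset.mem_Ico] at hj
    have hle : 1 ≤ q - j := by omega
    rw [d0dm hDD (q - j) (g (P j x)), Finset.sum_Ico_succ_top hle, Nat.sub_self]
    abel
  have hswap : ∑ j ∈ Finset.Ico 1 q, ∑ i ∈ Finset.Ico 1 (q - j), D i (D (q - j - i) (g (P j x)))
      = ∑ i ∈ Finset.Ico 1 q, ∑ j ∈ Finset.Ico 1 (q - i), D i (D (q - i - j) (g (P j x))) := by
    rw [tripleSwapB q (fun a b => D b (D (q - a - b) (g (P a x))))]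
    refine Finset.sum_congr rfl fun i _ => Finset.sum_congr rfl fun j _ => ?_
    have : q - j - i = q - i - j := by omega
    rw [this]
  have hA : ∑ i ∈ Finset.Ico 1 q, ∑ j ∈ Finset.Ico 1 (q - i), D i (D (q - i - j) (g (P j x)))
      = ∑ i ∈ Finset.Ico 1 q, (D i (D (q - i) x) - D i (P (q - i) x)) := by
    refine Finset.sum_congr rfl fun i hi => ?_
    simp only [Finset.mem_Ico] at hi
    have hle : 1 ≤ q - i := by omega
    rw [PqApply hP1 hPrec hle, map_sub, map_sum]
    abel
  have hreflect : ∑ i ∈ Finset.Ico 1 q, D i (P (q - i) x)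
      = ∑ j ∈ Finset.Ico 1 q, D (q - j) (P j x) := by
    refine sumIcoReflect q _ _ fun i h1 h2 => ?_
    have : q - (q - i) = i := by omega
    rw [this]
  calc D 0 (P q x)
      = D 0 (D q x) - ∑ j ∈ Finset.Ico 1 q, D 0 (D (q - j) (g (P j x))) := by
        rw [PqApply hP1 hPrec hq, map_sub, map_sum]
    _ = -∑ i ∈ Finset.Ico 1 q, D i (D (q - i) x)
        - (-∑ j ∈ Finset.Ico 1 q, ∑ i ∈ Finset.Ico 1 (q - j), D i (D (q - j - i) (g (P j x)))
           - ∑ j ∈ Finset.Ico 1 q, D (q - j) (D 0 (g (P j x)))) := by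
        rw [e2, Finset.sum_congr rfl e3, Finset.sum_sub_distrib, Finset.sum_neg_distrib]
    _ = -∑ i ∈ Finset.Ico 1 q, D i (D (q - i) x)
        + (∑ i ∈ Finset.Ico 1 q, (D i (D (q - i) x) - D i (P (q - i) x)))
        + ∑ j ∈ Finset.Ico 1 q, D (q - j) (D 0 (g (P j x))) := by
        rw [← hA, ← hswap]; abel
    _ = -∑ j ∈ Finset.Ico 1 q, D (q - j) (P j x)
        + ∑ j ∈ Finset.Ico 1 q, D (q - j) (D 0 (g (P j x))) := by
        rw [Finset.sum_sub_distrib, hreflect]; abel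
    _ = -∑ j ∈ Finset.Ico 1 q, D (q - j) (P j x - D 0 (g (P j x))) := by
        simp only [map_sub, Finset.sum_sub_distrib]; abel

/-- Identity (I_n): pure algebra relating the normal-form witnesses to `T_n`. -/
lemma In (hP1 : P 1 = D 1)
    (hPrec : ∀ r : ℕ, 2 ≤ r →
      P r = D r - ∑ j ∈ Finset.Ico 1 r, (D (r - j)).comp (g.comp (P j)))
    (A' : H) (ω : ℕ → H) {n : ℕ} (hn : 1 ≤ n) :
    D n A' - ∑ i ∈ Finset.Ico 1 n, D i
        (g (P (n - i) A') - ∑ j ∈ Finset.Ico 1 (n - i), g (P j (ω (n - i - j))) + ω (n - i))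
      = P n A' - ∑ m ∈ Finset.Ico 1 n, P (n - m) (ω m) := by
  have hexp : ∀ i ∈ Finset.Ico 1 n,
      D i (g (P (n - i) A') - ∑ j ∈ Finset.Ico 1 (n - i), g (P j (ω (n - i - j))) + ω (n - i))
        = D i (g (P (n - i) A'))
          - ∑ j ∈ Finset.Ico 1 (n - i), D i (g (P j (ω (n - i - j))))
          + D i (ω (n - i)) := by
    intro i _
    rw [map_add, map_sub, map_sum]
  have hS1 : ∑ i ∈ Finset.Ico 1 n, D i (g (P (n - i) A'))
      = D n A' - P n A' := by
    have : ∑ i ∈ Finset.Ico 1 n, D i (g (P (n - i) A'))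
        = ∑ j ∈ Finset.Ico 1 n, D (n - j) (g (P j A')) := by
      refine sumIcoReflect n _ _ fun i h1 h2 => ?_
      have : n - (n - i) = i := by omega
      rw [this]
    rw [this, PqApply hP1 hPrec hn]
    abel
  have hS2 : ∑ i ∈ Finset.Ico 1 n, ∑ j ∈ Finset.Ico 1 (n - i), D i (g (P j (ω (n - i - j))))
      = ∑ m ∈ Finset.Ico 1 n, (D (n - m) (ω m) - P (n - m) (ω m)) := by
    rw [tripleSwapA n (fun a b c => D a (g (P b (ω c))))]
    refine Finset.sum_congr rfl fun m hm => ?_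
    simp only [Finset.mem_Ico] at hm
    have hle : 1 ≤ n - m := by omega
    have hrefl : ∑ i ∈ Finset.Ico 1 (n - m), D i (g (P (n - m - i) (ω m)))
        = ∑ j ∈ Finset.Ico 1 (n - m), D (n - m - j) (g (P j (ω m))) := by
      refine sumIcoReflect (n - m) _ _ fun i h1 h2 => ?_
      have : n - m - (n - m - i) = i := by omega
      rw [this]
    rw [hrefl, PqApply hP1 hPrec hle (ω m)]
    abel
  have hS3 : ∑ i ∈ Finset.Ico 1 n, D i (ω (n - i))
      = ∑ m ∈ Finset.Ico 1 n, D (n - m) (ω m) := by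
    refine sumIcoReflect n _ _ fun i h1 h2 => ?_
    have : n - (n - i) = i := by omega
    rw [this]
  rw [Finset.sum_congr rfl hexp, Finset.sum_add_distrib, Finset.sum_sub_distrib,
    hS1, hS2, hS3, Finset.sum_sub_distrib]
  abel

/-- Identity (K_n): `d₀ T_n = -∑_{i=1}^{n-1} d_{n-i} (T_i - d₀ g T_i)`. -/
lemma Kn (hDD : ∀ n : ℕ, ∑ i ∈ Finset.range (n + 1), (D i).comp (D (n - i)) = 0)
    (hP1 : P 1 = D 1)
    (hPrec : ∀ r : ℕ, 2 ≤ r →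
      P r = D r - ∑ j ∈ Finset.Ico 1 r, (D (r - j)).comp (g.comp (P j)))
    (A' : H) (ω : ℕ → H) {n : ℕ} (hn : 1 ≤ n) (hA : D 0 A' = 0)
    (hω : ∀ m, 1 ≤ m → m < n → D 0 (ω m) = 0) :
    D 0 (P n A' - ∑ m ∈ Finset.Ico 1 n, P (n - m) (ω m))
      = -∑ i ∈ Finset.Ico 1 n, D (n - i)
          ((P i A' - ∑ m ∈ Finset.Ico 1 i, P (i - m) (ω m))
            - D 0 (g (P i A' - ∑ m ∈ Finset.Ico 1 i, P (i - m) (ω m)))) := by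
  have hsum2 : ∑ m ∈ Finset.Ico 1 n, D 0 (P (n - m) (ω m))
      = -∑ m ∈ Finset.Ico 1 n, ∑ j ∈ Finset.Ico 1 (n - m),
          D (n - m - j) (P j (ω m) - D 0 (g (P j (ω m)))) := by
    rw [← Finset.sum_neg_distrib]
    refine Finset.sum_congr rfl fun m hm => ?_
    simp only [Finset.mem_Ico] at hm
    have hle : 1 ≤ n - m := by omega
    rw [Cprime hDD hP1 hPrec hle (ω m) (hω m hm.1 hm.2)]
  have hswap : ∑ m ∈ Finset.Ico 1 n, ∑ j ∈ Finset.Ico 1 (n - m),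
        D (n - m - j) (P j (ω m) - D 0 (g (P j (ω m))))
      = ∑ i ∈ Finset.Ico 1 n, ∑ m ∈ Finset.Ico 1 i,
          D (n - i) (P (i - m) (ω m) - D 0 (g (P (i - m) (ω m)))) := by
    rw [tripleSwapA n (fun a b c => D c (P b (ω a) - D 0 (g (P b (ω a)))))]
    refine sumIcoReflect n _ _ fun m' h1 h2 => ?_
    have e1 : n - (n - m') = m' := by omega
    rw [e1]
  have hexp : ∀ i ∈ Finset.Ico 1 n,
      D (n - i) ((P i A' - ∑ m ∈ Finset.Ico 1 i, P (i - m) (ω m))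
        - D 0 (g (P i A' - ∑ m ∈ Finset.Ico 1 i, P (i - m) (ω m))))
      = D (n - i) (P i A' - D 0 (g (P i A')))
        - ∑ m ∈ Finset.Ico 1 i, D (n - i) (P (i - m) (ω m) - D 0 (g (P (i - m) (ω m)))) := by
    intro i _
    rw [← map_sum]
    rw [← map_sub]
    congr 1
    simp only [map_sub, map_sum, Finset.sum_sub_distrib]
    abel
  rw [map_sub, map_sum, Cprime hDD hP1 hPrec hn A' hA, hsum2, hswap,
    Finset.sum_congr rfl hexp, Finset.sum_sub_distrib]
  abel

end CoreAlgebra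


/-- `α ∈ B_r^{p,k}` for the spectral sequence of a multicomplex of Hilbert spaces. -/
def MemB {H : Type*} [NormedAddCommGroup H] [InnerProductSpace ℝ H]
    (Hgr : ℤ × ℤ → Submodule ℝ H) (D : ℕ → H →L[ℝ] H)
    (r : ℕ) (p k : ℤ) (α : H) : Prop :=
  α ∈ Hgr (p, k - p) ∧
    ∃ c : ℕ → H,
      (∀ i : ℕ, i ≤ r - 1 → c i ∈ Hgr (p - (i : ℤ), k - 1 - p + (i : ℤ))) ∧
      α = ∑ i ∈ Finset.range r, D i (c i) ∧
      (∀ l : ℕ, 1 ≤ l → l ≤ r - 1 → ∑ i ∈ Finset.Icc l (r - 1), D (i - l) (c i) = 0)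

/-- **The spectral sequence differentials in terms of Rumin forms and Rumin differentials**
(Proposition 3.13 of the paper).  For `r ≥ 1`, `α ∈ Z_r^{p,k}` with witnesses
`z_{p+1}, …, z_{p+r−1}`, there exist harmonic `ω̄_{p+i} ∈ ker d₀ ∩ ker d₀* ∩ H_{p+i,k−p−i}`
for `i = 1, …, r−1`, satisfying `d_c^j(Π₀α) = ∑_{i=1}^{j−1} d_c^i(ω̄_{p+j−i})` for all
`j = 1, …, r−1`, such that
`(d_r α − ∑_{i=1}^{r−1} d_{r−i} z_{p+i}) − (d_c^r(Π₀α) − ∑_{i=2}^{r−1} d_c^i(ω̄_{p+r−i}))`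
belongs to `B_r^{p+r,k+1}`; i.e. the `r`-th spectral sequence differential applied to the
class of `α` is represented by `d_c^r(Π₀α) − ∑_{i=2}^{r−1} d_c^i(ω̄_{p+r−i})`. -/
theorem spectral_differential_rumin_representative
    {H : Type*} [NormedAddCommGroup H] [InnerProductSpace ℝ H] [CompleteSpace H]
    (Hgr : ℤ × ℤ → Submodule ℝ H)
    (hinternal : DirectSum.IsInternal Hgr)
    (hclosed : ∀ ab : ℤ × ℤ, IsClosed (Hgr ab : Set H))
    (horth : ∀ ab cd : ℤ × ℤ, ab ≠ cd → ∀ x ∈ Hgr ab, ∀ y ∈ Hgr cd, ⟪x, y⟫_ℝ = 0)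
    (hfin : {ab : ℤ × ℤ | Hgr ab ≠ ⊥}.Finite)
    (s : ℕ) (D : ℕ → H →L[ℝ] H)
    (hDvan : ∀ i : ℕ, s ≤ i → D i = 0)
    (hDdeg : ∀ (i : ℕ) (a b : ℤ), ∀ x ∈ Hgr (a, b), D i x ∈ Hgr (a + (i : ℤ), b + 1 - (i : ℤ)))
    (hDD : ∀ n : ℕ, ∑ i ∈ Finset.range (n + 1), (D i).comp (D (n - i)) = 0)
    (hd0closed : IsClosed (LinearMap.range (D 0 : H →ₗ[ℝ] H) : Set H))
    (g : H →L[ℝ] H)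
    (hdg_perp : ∀ x : H, x - D 0 (g x) ∈ (LinearMap.range (D 0 : H →ₗ[ℝ] H))ᗮ)
    (hgd_mem : ∀ x : H, g (D 0 x) ∈ (LinearMap.ker (D 0 : H →ₗ[ℝ] H))ᗮ)
    (hgd_perp : ∀ x : H, x - g (D 0 x) ∈ ((LinearMap.ker (D 0 : H →ₗ[ℝ] H))ᗮ)ᗮ)
    (hgvan : ∀ x ∈ (LinearMap.range (D 0 : H →ₗ[ℝ] H))ᗮ, g x = 0)
    (hgdeg : ∀ (a b : ℤ), ∀ x ∈ Hgr (a, b), g x ∈ Hgr (a, b - 1))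
    (P : ℕ → H →L[ℝ] H) (hP1 : P 1 = D 1)
    (hPrec : ∀ r : ℕ, 2 ≤ r →
      P r = D r - ∑ j ∈ Finset.Ico 1 r, (D (r - j)).comp (g.comp (P j)))
    (dc : ℕ → H →L[ℝ] H)
    (hdc : ∀ r : ℕ, dc r = P r - g.comp ((D 0).comp (P r)) - (D 0).comp (g.comp (P r)))
    (Pi0 : H →L[ℝ] H)
    (hPi0 : ∀ x : H, Pi0 x = x - g (D 0 x) - D 0 (g x))
    (r : ℕ) (hr : 1 ≤ r) (p k : ℤ) (α : H) (z : ℕ → H)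
    (hα : α ∈ Hgr (p, k - p)) (hd0α : D 0 α = 0)
    (hz : ∀ j : ℕ, 1 ≤ j → j ≤ r - 1 → z j ∈ Hgr (p + (j : ℤ), k - p - (j : ℤ)))
    (hzrel : ∀ n : ℕ, 1 ≤ n → n ≤ r - 1 →
      D n α = ∑ i ∈ Finset.range n, D i (z (n - i))) :
    ∃ ω : ℕ → H,
      (∀ i : ℕ, 1 ≤ i → i ≤ r - 1 →
        D 0 (ω i) = 0 ∧ ContinuousLinearMap.adjoint (D 0) (ω i) = 0 ∧
          ω i ∈ Hgr (p + (i : ℤ), k - p - (i : ℤ))) ∧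
      (∀ j : ℕ, 1 ≤ j → j ≤ r - 1 →
        dc j (Pi0 α) = ∑ i ∈ Finset.Ico 1 j, dc i (ω (j - i))) ∧
      MemB Hgr D r (p + (r : ℤ)) (k + 1)
        ((D r α - ∑ i ∈ Finset.Ico 1 r, D (r - i) (z i))
          - (dc r (Pi0 α) - ∑ i ∈ Finset.Ico 2 r, dc i (ω (r - i)))) := by
  -- ## basic operator facts
  have hgg' : ∀ x : H, g (g x) = 0 := gg hDD hdg_perp hgd_mem hgvan
  have hd0gd0 : ∀ x : H, D 0 (g (D 0 x)) = D 0 x := d0gd0 hgd_perp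
  have hgd0g : ∀ x : H, g (D 0 (g x)) = g x := grange hdg_perp hgvan
  have hd00 : ∀ x : H, D 0 (D 0 x) = 0 := d0d0 hDD
  have hd0Pi : ∀ x : H, D 0 (Pi0 x) = 0 := by
    intro x
    rw [hPi0]
    simp [map_sub, hd0gd0, hd00]
  have hgPi : ∀ x : H, g (Pi0 x) = 0 := by
    intro x
    rw [hPi0]
    simp [map_sub, hgg', hgd0g]
  have hPid0 : ∀ x : H, Pi0 (D 0 x) = 0 := by
    intro x
    rw [hPi0]
    simp [hd00, hd0gd0]
  have hharmperp : ∀ x : H, g x = 0 → x ∈ (LinearMap.range (D 0 : H →ₗ[ℝ] H))ᗮ := by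
    intro x hx
    have h1 := hdg_perp x
    rwa [hx, map_zero, sub_zero] at h1
  have hPideg : ∀ (a b : ℤ) (x : H), x ∈ Hgr (a, b) → Pi0 x ∈ Hgr (a, b) := by
    intro a b x hx
    rw [hPi0]
    refine Submodule.sub_mem _ (Submodule.sub_mem _ hx ?_) ?_
    · have h2 := hgdeg _ _ _ (hDdeg 0 a b x hx)
      exact memCongr h2 (by push_cast; ring) (by push_cast; ring)
    · have h2 := hDdeg 0 _ _ _ (hgdeg a b x hx)
      exact memCongr h2 (by push_cast; ring) (by push_cast; ring)
  have hdcPi : ∀ (q : ℕ) (x : H), dc q x = Pi0 (P q x) := by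
    intro q x
    have h1 := congrArg (fun f : H →L[ℝ] H => f x) (hdc q)
    simp only [ContinuousLinearMap.coe_sub', Pi.sub_apply, ContinuousLinearMap.coe_comp',
      Function.comp_apply] at h1
    rw [hPi0]
    exact h1
  -- ## setup
  set γ := g α with hγdef
  have hγmem : γ ∈ Hgr (p, k - p - 1) := hgdeg _ _ _ hα
  set A := Pi0 α with hAdef
  have hAeq : A = α - D 0 γ := by
    rw [hAdef, hPi0, hd0α, map_zero, sub_zero]
  have hd0A : D 0 A = 0 := hd0Pi α
  have hAmem : A ∈ Hgr (p, k - p) := hPideg _ _ _ hα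
  -- ## the key fact: T_t = d₀ y_t for a normal-form witness system
  have key : ∀ (ω y : ℕ → H),
      (∀ m, 1 ≤ m → m ≤ r - 1 → D m A = ∑ i ∈ Finset.range m, D i (y (m - i))) →
      ∀ t, 1 ≤ t → t ≤ r - 1 →
      (∀ j, 1 ≤ j → j < t →
        y j = g (P j A) - ∑ i ∈ Finset.Ico 1 j, g (P i (ω (j - i))) + ω j) →
      P t A - ∑ m ∈ Finset.Ico 1 t, P (t - m) (ω m) = D 0 (y t) := by
    intro ω y hwit t ht1 ht2 hζ
    have hIt := In (D := D) (g := g) (P := P) hP1 hPrec A ω (n := t) ht1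
    have hw := hwit t ht1 ht2
    rw [Finset.range_eq_Ico, Finset.sum_eq_sum_Ico_succ_bot (by omega : 0 < t)] at hw
    simp only [Nat.sub_zero] at hw
    have hsame : ∑ i ∈ Finset.Ico 1 t, D i (y (t - i))
        = ∑ i ∈ Finset.Ico 1 t, D i
            (g (P (t - i) A) - ∑ j ∈ Finset.Ico 1 (t - i), g (P j (ω (t - i - j)))
              + ω (t - i)) := by
      refine Finset.sum_congr rfl fun i hi => ?_
      simp only [Finset.mem_Ico] at hi
      rw [hζ (t - i) (by omega) (by omega)]
    rw [← hIt, hw, hsame]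
    abel
  -- ## the inductive construction of the harmonic corrections ω
  have main : ∀ N : ℕ, ∃ ω y : ℕ → H,
      (∀ m : ℕ, ¬(1 ≤ m ∧ m ≤ r - 1) → ω m = 0) ∧
      (∀ m, 1 ≤ m → m ≤ N → m ≤ r - 1 →
        D 0 (ω m) = 0 ∧ g (ω m) = 0 ∧ ω m ∈ Hgr (p + (m : ℤ), k - p - (m : ℤ))) ∧
      (∀ j, 1 ≤ j → j ≤ r - 1 → y j ∈ Hgr (p + (j : ℤ), k - p - (j : ℤ))) ∧
      (∀ m, 1 ≤ m → m ≤ r - 1 → D m A = ∑ i ∈ Finset.range m, D i (y (m - i))) ∧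
      (∀ j, 1 ≤ j → j ≤ N → j ≤ r - 1 →
        y j = g (P j A) - ∑ i ∈ Finset.Ico 1 j, g (P i (ω (j - i))) + ω j) := by
    intro N
    induction N with
    | zero =>
      refine ⟨fun _ => 0, fun j => z j + D j γ, fun _ _ => rfl,
        fun m h1 h2 _ => by omega, ?_, ?_, fun j h1 h2 => by omega⟩
      · intro j h1 h2
        refine Submodule.add_mem _ (hz j h1 h2) ?_
        have h3 := hDdeg j _ _ _ hγmem
        exact memCongr h3 (by push_cast; ring) (by push_cast; ring)
      · intro m h1 h2
        have hdd := ddApply hDD m γ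
        rw [Finset.sum_range_succ, Nat.sub_self] at hdd
        have hDm : D m (D 0 γ) = -∑ i ∈ Finset.range m, D i (D (m - i) γ) := by
          rw [eq_neg_iff_add_eq_zero, add_comm]
          exact hdd
        have : D m A = D m α - D m (D 0 γ) := by rw [hAeq, map_sub]
        rw [this, hzrel m h1 h2, hDm, sub_neg_eq_add, ← Finset.sum_add_distrib]
        exact Finset.sum_congr rfl fun i _ => by simp
    | succ n ih =>
      obtain ⟨ω, y, h1, h2, h3, h4, h5⟩ := ih
      by_cases hn : n + 1 ≤ r - 1
      · have ht1 : 1 ≤ n + 1 := by omega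
        have hT : P (n + 1) A - ∑ m ∈ Finset.Ico 1 (n + 1), P (n + 1 - m) (ω m)
            = D 0 (y (n + 1)) :=
          key ω y h4 (n + 1) ht1 hn (fun j hj1 hj2 => h5 j hj1 (by omega) (by omega))
        set ω' : ℕ → H := fun m => if m = n + 1 then Pi0 (y (n + 1)) else ω m with hω'
        set y' : ℕ → H := fun j =>
          if j < n + 1 then y j
          else if j = n + 1 then
            g (P (n + 1) A) - ∑ i ∈ Finset.Ico 1 (n + 1), g (P i (ω (n + 1 - i)))
              + Pi0 (y (n + 1))
          else y j - D (j - (n + 1)) (g (y (n + 1))) with hy'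
        have hyt : y' (n + 1) = g (P (n + 1) A)
            - ∑ i ∈ Finset.Ico 1 (n + 1), g (P i (ω (n + 1 - i))) + Pi0 (y (n + 1)) := by
          simp [hy']
        have hylt : ∀ j, j < n + 1 → y' j = y j := by
          intro j hj
          simp only [hy', if_pos hj]
        have hygt : ∀ j, n + 1 < j → y' j = y j - D (j - (n + 1)) (g (y (n + 1))) := by
          intro j hj
          have e1 : ¬ j < n + 1 := by omega
          have e2 : ¬ j = n + 1 := by omega
          simp only [hy', if_neg e1, if_neg e2]
        have hωlt : ∀ m, m ≠ n + 1 → ω' m = ω m := by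
          intro m hm
          simp [hω', hm]
        have hωt : ω' (n + 1) = Pi0 (y (n + 1)) := by
          simp [hω']
        -- d₀ of the new slot agrees with the old one
        have hd0yt : D 0 (y' (n + 1)) = D 0 (y (n + 1)) := by
          have hrefl : ∑ i ∈ Finset.Ico 1 (n + 1), P i (ω (n + 1 - i))
              = ∑ m ∈ Finset.Ico 1 (n + 1), P (n + 1 - m) (ω m) := by
            refine sumIcoReflect (n + 1) _ _ fun i hi1 hi2 => ?_
            have e1 : n + 1 - (n + 1 - i) = i := by omega
            rw [e1]
          have hgT : g (P (n + 1) A) - ∑ i ∈ Finset.Ico 1 (n + 1), g (P i (ω (n + 1 - i)))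
              = g (D 0 (y (n + 1))) := by
            rw [← map_sum, ← map_sub, hrefl, hT]
          rw [hyt, hgT, map_add, hd0gd0, hd0Pi, add_zero]
        refine ⟨ω', y', ?_, ?_, ?_, ?_, ?_⟩
        · intro m hm
          rw [hωlt m (by omega)]
          exact h1 m hm
        · intro m hm1 hm2 hm3
          rcases eq_or_lt_of_le hm2 with he | hlt
          · rw [he, hωt]
            exact ⟨hd0Pi _, hgPi _, hPideg _ _ _ (h3 (n + 1) ht1 hn)⟩
          · rw [hωlt m (by omega)]
            exact h2 m hm1 (by omega) hm3
        · intro j hj1 hj2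
          rcases lt_trichotomy j (n + 1) with hlt | he | hgt
          · rw [hylt j hlt]; exact h3 j hj1 hj2
          · rw [he, hyt]
            refine Submodule.add_mem _ (Submodule.sub_mem _ ?_ ?_) ?_
            · have hPA := Pdeg hP1 hPrec hDdeg hgdeg (n + 1) ht1 p (k - p) A hAmem
              have := hgdeg _ _ _ hPA
              exact memCongr this (by push_cast; ring) (by push_cast; ring)
            · refine Submodule.sum_mem _ fun i hi => ?_
              simp only [Finset.mem_Ico] at hi
              have hωm := (h2 (n + 1 - i) (by omega) (by omega) (by omega)).2.2
              have hPm := Pdeg hP1 hPrec hDdeg hgdeg i hi.1 _ _ _ hωm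
              have := hgdeg _ _ _ hPm
              exact memCongr this (by omega) (by omega)
            · exact hPideg _ _ _ (h3 (n + 1) ht1 hn)
          · rw [hygt j hgt]
            refine Submodule.sub_mem _ (h3 j hj1 hj2) ?_
            have hgy := hgdeg _ _ _ (h3 (n + 1) ht1 hn)
            have := hDdeg (j - (n + 1)) _ _ _ hgy
            exact memCongr this (by omega) (by omega)
        · intro m hm1 hm2
          rcases lt_trichotomy m (n + 1) with hlt | he | hgt
          · rw [h4 m hm1 hm2]
            refine Finset.sum_congr rfl fun i hi => ?_
            simp only [Finset.mem_range] at hi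
            rw [hylt (m - i) (by omega)]
          · subst he
            rw [h4 (n + 1) hm1 hm2]
            have hsplit : ∀ w : ℕ → H,
                ∑ i ∈ Finset.range (n + 1), D i (w (n + 1 - i))
                  = D 0 (w (n + 1)) + ∑ i ∈ Finset.Ico 1 (n + 1), D i (w (n + 1 - i)) := by
              intro w
              rw [Finset.range_eq_Ico, Finset.sum_eq_sum_Ico_succ_bot (by omega : 0 < n + 1)]
              simp only [Nat.sub_zero]
            rw [hsplit y', hsplit y, hd0yt]
            congr 1
            refine Finset.sum_congr rfl fun i hi => ?_
            simp only [Finset.mem_Ico] at hi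
            rw [hylt (n + 1 - i) (by omega)]
          · rw [h4 m hm1 hm2]
            have hds : ∑ i ∈ Finset.range m, (D i (y' (m - i)) - D i (y (m - i))) = 0 := by
              have hsub : Finset.range (m - (n + 1) + 1) ⊆ Finset.range m := by
                intro x hx
                simp only [Finset.mem_range] at hx ⊢
                omega
              rw [← Finset.sum_subset hsub ?_]
              · have hterm : ∀ i ∈ Finset.range (m - (n + 1) + 1),
                    D i (y' (m - i)) - D i (y (m - i))
                      = -(D i (D (m - (n + 1) - i) (g (y (n + 1))))) := by
                  intro i hi
                  simp only [Finset.mem_range] at hi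
                  rw [← map_sub, ← map_neg]
                  congr 1
                  rcases eq_or_lt_of_le (by omega : i ≤ m - (n + 1)) with he2 | hlt2
                  · have hmi : m - i = n + 1 := by omega
                    have hz0 : m - (n + 1) - i = 0 := by omega
                    rw [hmi, hz0, hyt, hPi0]
                    have hrefl : ∑ i ∈ Finset.Ico 1 (n + 1), P i (ω (n + 1 - i))
                        = ∑ m' ∈ Finset.Ico 1 (n + 1), P (n + 1 - m') (ω m') := by
                      refine sumIcoReflect (n + 1) _ _ fun i' hi1 hi2 => ?_
                      have e1 : n + 1 - (n + 1 - i') = i' := by omega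
                      rw [e1]
                    have hgT : g (P (n + 1) A)
                        - ∑ i ∈ Finset.Ico 1 (n + 1), g (P i (ω (n + 1 - i)))
                        = g (D 0 (y (n + 1))) := by
                      rw [← map_sum, ← map_sub, hrefl, hT]
                    rw [hgT]
                    abel
                  · have hmi : n + 1 < m - i := by omega
                    rw [hygt (m - i) hmi]
                    have : m - i - (n + 1) = m - (n + 1) - i := by omega
                    rw [this]
                    abel
                rw [Finset.sum_congr rfl hterm, Finset.sum_neg_distrib,
                  ddApply hDD (m - (n + 1)) (g (y (n + 1))), neg_zero]
              · intro x hx1 hx2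
                simp only [Finset.mem_range] at hx1 hx2
                rw [hylt (m - x) (by omega), sub_self]
            rw [Finset.sum_sub_distrib, sub_eq_zero] at hds
            exact hds.symm
        · intro j hj1 hj2 hj3
          rcases eq_or_lt_of_le hj2 with he | hlt
          · rw [he, hyt, hωt]
            congr 2
            refine Finset.sum_congr rfl fun i hi => ?_
            simp only [Finset.mem_Ico] at hi
            rw [hωlt (n + 1 - i) (by omega)]
          · rw [hylt j (by omega), h5 j hj1 (by omega) hj3, hωlt j (by omega)]
            congr 2
            refine Finset.sum_congr rfl fun i hi => ?_
            simp only [Finset.mem_Ico] at hi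
            rw [hωlt (j - i) (by omega)]
      · refine ⟨ω, y, h1, ?_, h3, h4, ?_⟩
        · intro m hm1 hm2 hm3
          exact h2 m hm1 (by omega) hm3
        · intro j hj1 hj2 hj3
          exact h5 j hj1 (by omega) hj3
  obtain ⟨ω, y, hω0, hωH, hydeg, hywit, hyζ⟩ := main (r - 1)
  have hζall : ∀ j, 1 ≤ j → j ≤ r - 1 →
      y j = g (P j A) - ∑ i ∈ Finset.Ico 1 j, g (P i (ω (j - i))) + ω j :=
    fun j a b => hyζ j a b b
  have hωH' : ∀ m, 1 ≤ m → m ≤ r - 1 →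
      D 0 (ω m) = 0 ∧ g (ω m) = 0 ∧ ω m ∈ Hgr (p + (m : ℤ), k - p - (m : ℤ)) :=
    fun m a b => hωH m a b b
  have hT : ∀ t, 1 ≤ t → t ≤ r - 1 →
      P t A - ∑ m ∈ Finset.Ico 1 t, P (t - m) (ω m) = D 0 (y t) :=
    fun t a b => key ω y hywit t a b (fun j c d => hζall j c (by omega))
  refine ⟨ω, ?_, ?_, ?_⟩
  · intro i hi1 hi2
    obtain ⟨ha, hb, hc⟩ := hωH' i hi1 hi2
    exact ⟨ha, adjointZero _ (hharmperp _ hb), hc⟩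
  · intro j hj1 hj2
    have hrefl : ∑ m ∈ Finset.Ico 1 j, Pi0 (P (j - m) (ω m))
        = ∑ i ∈ Finset.Ico 1 j, Pi0 (P i (ω (j - i))) := by
      refine sumIcoReflect j _ _ fun m a b => ?_
      have e1 : j - (j - m) = m := by omega
      rw [e1]
    have e : dc j A - ∑ i ∈ Finset.Ico 1 j, dc i (ω (j - i)) = 0 := by
      rw [hdcPi, Finset.sum_congr rfl fun i _ => hdcPi i (ω (j - i)),
        ← hrefl, ← map_sum, ← map_sub, hT j hj1 hj2, hPid0]
    exact sub_eq_zero.mp e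
  · -- ## the MemB part
    set Tr := P r A - ∑ m ∈ Finset.Ico 1 r, P (r - m) (ω m) with hTrdef
    have hd0Tr : D 0 Tr = 0 := by
      have hK := Kn (D := D) (g := g) (P := P) hDD hP1 hPrec A ω (n := r) hr hd0A
        (fun m a b => (hωH' m a (by omega)).1)
      rw [← hTrdef] at hK
      rw [hK, Finset.sum_eq_zero, neg_zero]
      intro i hi
      simp only [Finset.mem_Ico] at hi
      rw [hT i hi.1 (by omega), hd0gd0, sub_self, map_zero]
    have hInr := In (D := D) (g := g) (P := P) hP1 hPrec A ω (n := r) hr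
    have hDrA : D r A = Tr + ∑ i ∈ Finset.Ico 1 r, D i (y (r - i)) := by
      have hsamey : ∑ i ∈ Finset.Ico 1 r, D i
          (g (P (r - i) A) - ∑ j ∈ Finset.Ico 1 (r - i), g (P j (ω (r - i - j)))
            + ω (r - i))
          = ∑ i ∈ Finset.Ico 1 r, D i (y (r - i)) := by
        refine Finset.sum_congr rfl fun i hi => ?_
        simp only [Finset.mem_Ico] at hi
        rw [← hζall (r - i) (by omega) (by omega)]
      rw [hsamey, ← hTrdef] at hInr
      exact eq_add_of_sub_eq hInr
    set ob := ω (r - 1) with hobdef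
    have hobfacts : D 0 ob = 0 ∧ ob ∈ Hgr (p + (r : ℤ) - 1, k - p - (r : ℤ) + 1) := by
      rcases eq_or_lt_of_le hr with he | h2
      · have hob' : ob = 0 := by rw [hobdef]; exact hω0 _ (by omega)
        rw [hob']
        exact ⟨map_zero _, Submodule.zero_mem _⟩
      · obtain ⟨ha, hb, hc⟩ := hωH' (r - 1) (by omega) (by omega)
        exact ⟨ha, memCongr hc (by omega) (by omega)⟩
    obtain ⟨hob0, hobmem⟩ := hobfacts
    have hd0D1ob : D 0 (D 1 ob) = 0 := by
      have h01 := ddApply hDD 1 ob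
      rw [Finset.sum_range_succ, Finset.sum_range_one] at h01
      simp only [Nat.sub_zero, Nat.sub_self] at h01
      rw [hob0, map_zero, add_zero] at h01
      exact h01
    have hsplitD : D r (D 0 γ)
        = -D 0 (D r γ) - ∑ i ∈ Finset.Ico 1 r, D i (D (r - i) γ) := by
      have hdd := ddApply hDD r γ
      rw [Finset.sum_range_succ, Nat.sub_self, Finset.range_eq_Ico,
        Finset.sum_eq_sum_Ico_succ_bot (by omega : 0 < r)] at hdd
      simp only [Nat.sub_zero] at hdd
      have h2 := eq_neg_of_add_eq_zero_right hdd
      rw [h2]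
      abel
    have hstep1 : D r α - ∑ i ∈ Finset.Ico 1 r, D (r - i) (z i)
        = Tr - D 0 (D r γ) + ∑ i ∈ Finset.Ico 1 r, D (r - i) (y i - D i γ - z i) := by
      have hα' : α = A + D 0 γ := by rw [hAeq]; abel
      have hrefly : ∑ i ∈ Finset.Ico 1 r, D i (y (r - i))
          = ∑ i ∈ Finset.Ico 1 r, D (r - i) (y i) := by
        refine sumIcoReflect r _ _ fun i a b => ?_
        have e1 : r - (r - i) = i := by omega
        rw [e1]
      have hreflγ : ∑ i ∈ Finset.Ico 1 r, D i (D (r - i) γ)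
          = ∑ i ∈ Finset.Ico 1 r, D (r - i) (D i γ) := by
        refine sumIcoReflect r _ _ fun i a b => ?_
        have e1 : r - (r - i) = i := by omega
        rw [e1]
      calc D r α - ∑ i ∈ Finset.Ico 1 r, D (r - i) (z i)
          = D r A + D r (D 0 γ) - ∑ i ∈ Finset.Ico 1 r, D (r - i) (z i) := by
            rw [hα', map_add]
        _ = (Tr + ∑ i ∈ Finset.Ico 1 r, D (r - i) (y i))
            + (-D 0 (D r γ) - ∑ i ∈ Finset.Ico 1 r, D (r - i) (D i γ))
            - ∑ i ∈ Finset.Ico 1 r, D (r - i) (z i) := by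
            rw [hDrA, hrefly, hsplitD, hreflγ]
        _ = Tr - D 0 (D r γ) + ∑ i ∈ Finset.Ico 1 r, D (r - i) (y i - D i γ - z i) := by
            simp only [map_sub, Finset.sum_sub_distrib]
            abel
    have hPiTr0 : Pi0 Tr = Tr - D 0 (g Tr) := by
      rw [hPi0, hd0Tr, map_zero, sub_zero]
    have hPiD1ob : Pi0 (D 1 ob) = D 1 ob - D 0 (g (D 1 ob)) := by
      rw [hPi0, hd0D1ob, map_zero, sub_zero]
    have hPiTr : Pi0 Tr = Pi0 (P r A) - ∑ i ∈ Finset.Ico 1 r, Pi0 (P i (ω (r - i))) := by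
      rw [hTrdef, map_sub, map_sum]
      congr 1
      refine sumIcoReflect r _ _ fun m a b => ?_
      have e1 : r - (r - m) = m := by omega
      rw [e1]
    have hstep2 : dc r A - ∑ i ∈ Finset.Ico 2 r, dc i (ω (r - i))
        = Pi0 Tr + Pi0 (D 1 ob) := by
      rcases eq_or_lt_of_le hr with he | h2
      · have h1r : Finset.Ico 1 r = ∅ := Finset.Ico_eq_empty (by omega)
        have h2r : Finset.Ico 2 r = ∅ := Finset.Ico_eq_empty (by omega)
        have hob' : ob = 0 := by rw [hobdef]; exact hω0 _ (by omega)
        rw [h2r, Finset.sum_empty, sub_zero, hdcPi, hPiTr, h1r, Finset.sum_empty,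
          sub_zero, hob', map_zero, map_zero, add_zero]
      · have hsplitb : ∑ i ∈ Finset.Ico 1 r, Pi0 (P i (ω (r - i)))
            = Pi0 (P 1 (ω (r - 1))) + ∑ i ∈ Finset.Ico 2 r, Pi0 (P i (ω (r - i))) :=
          Finset.sum_eq_sum_Ico_succ_bot h2 _
        rw [hdcPi, Finset.sum_congr rfl fun i _ => hdcPi i (ω (r - i)), hPiTr, hsplitb,
          hP1, ← hobdef]
        abel
    have hβ : (D r α - ∑ i ∈ Finset.Ico 1 r, D (r - i) (z i))
        - (dc r A - ∑ i ∈ Finset.Ico 2 r, dc i (ω (r - i)))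
        = D 0 (g Tr + g (D 1 ob) - D r γ)
          + ∑ i ∈ Finset.Ico 1 r, D (r - i) (y i - D i γ - z i) - D 1 ob := by
      rw [hstep1, hstep2, hPiTr0, hPiD1ob]
      simp only [map_add, map_sub]
      abel
    set c : ℕ → H := fun i => if i = 0 then g Tr + g (D 1 ob) - D r γ
      else (y (r - i) - D (r - i) γ - z (r - i)) - (if i = 1 then ob else 0) with hcdef
    have hc0 : c 0 = g Tr + g (D 1 ob) - D r γ := by simp [hcdef]
    have hci : ∀ i, 1 ≤ i →
        c i = (y (r - i) - D (r - i) γ - z (r - i)) - (if i = 1 then ob else 0) := by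
      intro i hi
      have : ¬ i = 0 := by omega
      simp [hcdef, this]
    have hTrmem : Tr ∈ Hgr (p + (r : ℤ), k - p + 1 - (r : ℤ)) := by
      rw [hTrdef]
      refine Submodule.sub_mem _ ?_ (Submodule.sum_mem _ fun m hm => ?_)
      · exact memCongr (Pdeg hP1 hPrec hDdeg hgdeg r hr p (k - p) A hAmem)
          (by ring) (by ring)
      · simp only [Finset.mem_Ico] at hm
        have h1 := Pdeg hP1 hPrec hDdeg hgdeg (r - m) (by omega) _ _ _
          (hωH' m hm.1 (by omega)).2.2
        exact memCongr h1 (by omega) (by omega)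
    have hcdeg : ∀ i : ℕ, i ≤ r - 1 →
        c i ∈ Hgr (p + (r : ℤ) - (i : ℤ), k + 1 - 1 - (p + (r : ℤ)) + (i : ℤ)) := by
      intro i hi
      rcases Nat.eq_zero_or_pos i with h0 | h1
      · subst h0
        rw [hc0]
        refine Submodule.sub_mem _ (Submodule.add_mem _ ?_ ?_) ?_
        · exact memCongr (hgdeg _ _ _ hTrmem) (by push_cast; ring) (by push_cast; ring)
        · have hD1 := hDdeg 1 _ _ _ hobmem
          have h2 := hgdeg _ _ _ hD1
          exact memCongr h2 (by push_cast; ring) (by push_cast; ring)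
        · have h2 := hDdeg r _ _ _ hγmem
          exact memCongr h2 (by push_cast; ring) (by push_cast; ring)
      · rw [hci i h1]
        have hri1 : 1 ≤ r - i := by omega
        have hri2 : r - i ≤ r - 1 := by omega
        refine Submodule.sub_mem _ (Submodule.sub_mem _ (Submodule.sub_mem _ ?_ ?_) ?_) ?_
        · exact memCongr (hydeg (r - i) hri1 hri2) (by omega) (by omega)
        · have h2 := hDdeg (r - i) _ _ _ hγmem
          exact memCongr h2 (by omega) (by omega)
        · exact memCongr (hz (r - i) hri1 hri2) (by omega) (by omega)
        · by_cases hi1 : i = 1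
          · rw [if_pos hi1]
            subst hi1
            exact memCongr hobmem (by omega) (by omega)
          · rw [if_neg hi1]
            exact Submodule.zero_mem _
    have hsum0 : ∑ i ∈ Finset.range r, D i (c i)
        = D 0 (c 0) + ∑ i ∈ Finset.Ico 1 r, D i (c i) := by
      rw [Finset.range_eq_Ico, Finset.sum_eq_sum_Ico_succ_bot (by omega : 0 < r)]
    have hsumite : ∑ i ∈ Finset.Ico 1 r, D i (if i = 1 then ob else 0) = D 1 ob := by
      rcases eq_or_lt_of_le hr with he | h2
      · have h1r : Finset.Ico 1 r = ∅ := Finset.Ico_eq_empty (by omega)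
        have hob' : ob = 0 := by rw [hobdef]; exact hω0 _ (by omega)
        rw [h1r, Finset.sum_empty, hob', map_zero]
      · have hterm : ∀ i ∈ Finset.Ico 1 r, D i (if i = 1 then ob else 0)
            = if i = 1 then D i ob else 0 := by
          intro i _
          by_cases h : i = 1
          · rw [if_pos h, if_pos h]
          · rw [if_neg h, if_neg h, map_zero]
        rw [Finset.sum_congr rfl hterm, Finset.sum_ite_eq',
          if_pos (Finset.mem_Ico.mpr ⟨le_rfl, h2⟩)]
    have hreflw : ∑ i ∈ Finset.Ico 1 r, D i (y (r - i) - D (r - i) γ - z (r - i))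
        = ∑ i ∈ Finset.Ico 1 r, D (r - i) (y i - D i γ - z i) := by
      refine sumIcoReflect r _ _ fun i a b => ?_
      have e1 : r - (r - i) = i := by omega
      rw [e1]
    have hceq : (D r α - ∑ i ∈ Finset.Ico 1 r, D (r - i) (z i))
        - (dc r A - ∑ i ∈ Finset.Ico 2 r, dc i (ω (r - i)))
        = ∑ i ∈ Finset.range r, D i (c i) := by
      have hcsum : ∑ i ∈ Finset.Ico 1 r, D i (c i)
          = ∑ i ∈ Finset.Ico 1 r, D (r - i) (y i - D i γ - z i) - D 1 ob := by
        have h1 : ∀ i ∈ Finset.Ico 1 r, D i (c i)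
            = D i (y (r - i) - D (r - i) γ - z (r - i))
              - D i (if i = 1 then ob else 0) := by
          intro i hi
          rw [hci i (Finset.mem_Ico.mp hi).1, map_sub]
        rw [Finset.sum_congr rfl h1, Finset.sum_sub_distrib, hreflw, hsumite]
      rw [hβ, hsum0, hc0, hcsum]
      abel
    have hcl : ∀ l : ℕ, 1 ≤ l → l ≤ r - 1 →
        ∑ i ∈ Finset.Icc l (r - 1), D (i - l) (c i) = 0 := by
      intro l hl1 hl2
      have hIccIco : Finset.Icc l (r - 1) = Finset.Ico l r := by
        rw [← Finset.Ico_add_one_right_eq_Icc]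
        congr 1
        omega
      have hterm : ∀ i ∈ Finset.Ico l r, D (i - l) (c i)
          = D (i - l) (y (r - i) - D (r - i) γ - z (r - i))
            - D (i - l) (if i = 1 then ob else 0) := by
        intro i hi
        simp only [Finset.mem_Ico] at hi
        rw [hci i (by omega), map_sub]
      have hzero : ∀ i ∈ Finset.Ico l r, D (i - l) (if i = 1 then ob else 0) = 0 := by
        intro i hi
        simp only [Finset.mem_Ico] at hi
        by_cases h : i = 1
        · have e0 : i - l = 0 := by omega
          rw [if_pos h, e0, hob0]
        · rw [if_neg h, map_zero]
      rw [hIccIco, Finset.sum_congr rfl hterm, Finset.sum_sub_distrib,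
        Finset.sum_congr rfl hzero, Finset.sum_const_zero, sub_zero,
        Finset.sum_Ico_eq_sum_range]
      have hq1 : 1 ≤ r - l := by omega
      have hq2 : r - l ≤ r - 1 := by omega
      have hind : ∀ i ∈ Finset.range (r - l),
          D (l + i - l) (y (r - (l + i)) - D (r - (l + i)) γ - z (r - (l + i)))
            = D i (y (r - l - i)) - D i (D (r - l - i) γ) - D i (z (r - l - i)) := by
        intro i hi
        simp only [Finset.mem_range] at hi
        have e1 : l + i - l = i := by omega
        have e2 : r - (l + i) = r - l - i := by omega
        rw [e1, e2, map_sub, map_sub]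
      rw [Finset.sum_congr rfl hind, Finset.sum_sub_distrib, Finset.sum_sub_distrib]
      have hy : ∑ i ∈ Finset.range (r - l), D i (y (r - l - i)) = D (r - l) A :=
        (hywit (r - l) hq1 hq2).symm
      have hzq : ∑ i ∈ Finset.range (r - l), D i (z (r - l - i)) = D (r - l) α :=
        (hzrel (r - l) hq1 hq2).symm
      have hγq : ∑ i ∈ Finset.range (r - l), D i (D (r - l - i) γ)
          = -(D (r - l) (D 0 γ)) := by
        have hdd := ddApply hDD (r - l) γ
        rw [Finset.sum_range_succ, Nat.sub_self] at hdd
        exact eq_neg_of_add_eq_zero_left hdd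
      rw [hy, hzq, hγq, sub_neg_eq_add, ← map_add, ← map_sub]
      have e3 : A + D 0 γ - α = 0 := by rw [hAeq]; abel
      rw [e3, map_zero]
    have hmem : (D r α - ∑ i ∈ Finset.Ico 1 r, D (r - i) (z i))
        - (dc r A - ∑ i ∈ Finset.Ico 2 r, dc i (ω (r - i)))
        ∈ Hgr (p + (r : ℤ), k + 1 - (p + (r : ℤ))) := by
      rw [hceq]
      refine Submodule.sum_mem _ fun i hi => ?_
      simp only [Finset.mem_range] at hi
      have hc := hcdeg i (by omega)
      have h2 := hDdeg i _ _ _ hc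
      exact memCongr h2 (by push_cast; ring) (by push_cast; ring)
    exact ⟨hmem, c, hcdeg, hceq, hcl⟩
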